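/- If λ⁺(M) > 1, then the random walk (X_n)_{n≥0} on the directed cover T is transient. -/

import Mathlib

open Filter Topology MeasureTheory Set
open scoped ENNReal NNReal Classical

/-- Vertices of the directed cover of the directed graph `(V, E)` rooted at `i₀`:
finite directed paths in `G` starting at `i₀`. -/
def Cover (V : Type) (E : V → V → Prop) (i₀ : V) : Type :=
  {l : List V // List.Chain E i₀ l}

namespace Cover

variable {V : Type} {E : V → V → Prop} {i₀ : V}

instance : MeasurableSpace (Cover V E i₀) := ⊤

/-- The root of the directed cover: the trivial path. -/
def root : Cover V E i₀ := ⟨[], List.Chain.nil⟩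

/-- The label of a cover vertex: the endpoint of the corresponding path in `G`. -/
def lbl (x : Cover V E i₀) : V := x.val.getLastD i₀

/-- The height of a cover vertex: the graph distance in the tree from the root. -/
def ht (x : Cover V E i₀) : ℕ := x.val.length

/-- `y.IsChildOf x` holds iff `y` is a direct descendant (successor) of `x` in the tree. -/
def IsChildOf (y x : Cover V E i₀) : Prop := ∃ j : V, y.val = x.val ++ [j]

end Cover

/-- One-step transition probabilities of the nearest-neighbour random walk on the
directed cover, with forward probabilities `pf` (on labels), backward probabilities `pm`
and a loop at the root. -/
noncomputable def coverP {V : Type} (E : V → V → Prop) (i₀ : V)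
    (pf : V → V → ℝ) (pm : V → ℝ) (x y : Cover V E i₀) : ℝ :=
  if Cover.IsChildOf y x then pf x.lbl y.lbl
  else if x.val = [] ∧ y.val = [] then pm i₀
  else if Cover.IsChildOf x y then pm x.lbl
  else 0

/-- `n`-step transition probabilities of the Markov chain with one-step kernel `p`. -/
noncomputable def kpow {S : Type} (p : S → S → ℝ) : ℕ → S → S → ℝ
  | 0 => fun x y => if x = y then 1 else 0
  | n + 1 => fun x y => ∑' z : S, p x z * kpow p n z y

/-- Taboo probabilities: `taboo p w n x y` is the probability that the Markov chain with
one-step kernel `p` started at `x` is at `y` at time `n`, avoiding `w` at all times `m < n`. -/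
noncomputable def taboo {S : Type} (p : S → S → ℝ) (w : S) : ℕ → S → S → ℝ
  | 0 => fun x y => if x = y then 1 else 0
  | n + 1 => fun x y => if x = w then 0 else ∑' z : S, p x z * taboo p w n z y

/-- The probability that the Markov chain with kernel `p` started at `o` returns to `o`
(the sum over `n` of the probabilities of a first return at time `n + 1`). -/
noncomputable def returnProbA {S : Type} (p : S → S → ℝ) (o : S) : ℝ≥0∞ :=
  ∑' n : ℕ, ENNReal.ofReal (∑' z : S, p o z * taboo p o n z o)

/-- The upper Collatz–Wielandt number `λ⁺(M)` of a nonnegative matrix `M`. -/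
noncomputable def lambdaPlus {V : Type} (M : V → V → ℝ) : ℝ :=
  sSup {lam : ℝ | 0 < lam ∧ ∃ f : V → ℝ, (∀ i, 0 ≤ f i) ∧ f ≠ 0 ∧
    BddAbove (Set.range f) ∧ ∀ i, lam * f i ≤ ∑' j : V, M i j * f j}

/-- The `ℓ∞`-spectral radius `r∞(M) = lim_n ‖Mⁿ‖_∞^(1/n)` of a nonnegative matrix `M`
(the limit exists; it is expressed via `limsup`). -/
noncomputable def rInfty {V : Type} (M : V → V → ℝ) : ℝ :=
  Filter.limsup (fun n : ℕ => (⨆ i : V, ∑' j : V, kpow M n i j) ^ ((n : ℝ)⁻¹)) Filter.atTop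

/-- `(Ω, P, X)` is a realization of the nearest-neighbour random walk on the directed cover
started at the root: the finite-dimensional distributions are the Markovian ones given by the
kernel `coverP E i₀ pf pm` and starting point `Cover.root`. -/
def IsCoverWalk {V : Type} (E : V → V → Prop) (i₀ : V) (pf : V → V → ℝ) (pm : V → ℝ)
    {Ω : Type} [MeasurableSpace Ω] (P : Measure Ω) (X : ℕ → Ω → Cover V E i₀) : Prop :=
  (∀ n, Measurable (X n)) ∧
  ∀ (n : ℕ) (path : ℕ → Cover V E i₀),
    P {ω | ∀ k ≤ n, X k ω = path k} =
      (if path 0 = Cover.root then 1 else 0) *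
        ∏ k ∈ Finset.range n, ENNReal.ofReal (coverP E i₀ pf pm (path k) (path (k + 1)))

/-- The length of a path (given by its list of labels, with previous vertex `prev`)
with respect to the weight function `w` on the edges of `G`. -/
noncomputable def pathLen {V : Type} (w : V → V → ℝ) : V → List V → ℝ
  | _, [] => 0
  | prev, j :: rest => w prev j + pathLen w j rest


theorem chain_concat_iff {α : Type*} {R : α → α → Prop} (a b : α) (l : List α) :
    List.Chain R a (l ++ [b]) ↔ List.Chain R a l ∧ R (l.getLastD a) b := by
  induction l generalizing a with
  | nil => simp [List.Chain]
  | cons c l ih =>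
    simp only [List.Chain] at ih ⊢
    rw [List.cons_append, List.isChain_cons_cons, ih, List.getLastD_cons, List.isChain_cons_cons]
    tauto

namespace CoverAux
variable {V : Type} {E : V → V → Prop} {i₀ : V}

instance instCovCount [Countable V] : Countable (Cover V E i₀) := by
  unfold Cover; infer_instance

/-- parent (root for the root) -/
def par (x : Cover V E i₀) : Cover V E i₀ :=
  ⟨x.val.dropLast, by
    rcases x.val.eq_nil_or_concat with h | ⟨l', bb, h⟩
    · simp [h, List.Chain]
    · rw [List.concat_eq_append] at h
      have := x.2
      rw [h] at this ⊢
      rw [List.dropLast_concat]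
      exact ((chain_concat_iff _ _ _).1 this).1⟩

def chd (x : Cover V E i₀) (j : V) (hj : E x.lbl j) : Cover V E i₀ :=
  ⟨x.val ++ [j], (chain_concat_iff _ _ _).2 ⟨x.2, hj⟩⟩

@[simp] theorem lbl_chd (x : Cover V E i₀) (j : V) (hj : E x.lbl j) :
    (chd x j hj).lbl = j := List.getLastD_concat

@[simp] theorem lbl_root : (Cover.root : Cover V E i₀).lbl = i₀ := rfl

@[simp] theorem par_root : par (Cover.root : Cover V E i₀) = Cover.root := rfl

theorem ne_root_iff {x : Cover V E i₀} : x ≠ Cover.root ↔ x.val ≠ [] := by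
  constructor
  · intro h h'; exact h (Subtype.ext h')
  · intro h h'; exact h (by rw [h']; rfl)

theorem concat_eq {x : Cover V E i₀} (hx : x ≠ Cover.root) :
    (par x).val ++ [x.lbl] = x.val := by
  rcases x.val.eq_nil_or_concat with h | ⟨l', bb, h⟩
  · exact absurd h (ne_root_iff.1 hx)
  · rw [List.concat_eq_append] at h
    show x.val.dropLast ++ [x.val.getLastD i₀] = x.val
    rw [h, List.dropLast_concat, List.getLastD_concat]

theorem chd_par {x : Cover V E i₀} (hx : x ≠ Cover.root) :
    ∃ hj : E (par x).lbl x.lbl, chd (par x) x.lbl hj = x := by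
  have h := concat_eq hx
  have hch : List.Chain E i₀ ((par x).val ++ [x.lbl]) := by rw [h]; exact x.2
  have hj := ((chain_concat_iff _ _ _).1 hch).2
  exact ⟨hj, Subtype.ext h⟩

theorem chd_ne_root (x : Cover V E i₀) (j : V) (hj : E x.lbl j) :
    chd x j hj ≠ Cover.root := by
  rw [ne_root_iff]; show x.val ++ [j] ≠ []; simp

@[simp] theorem par_chd (x : Cover V E i₀) (j : V) (hj : E x.lbl j) :
    par (chd x j hj) = x := by
  apply Subtype.ext
  show (x.val ++ [j]).dropLast = x.val
  exact List.dropLast_concat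

theorem chd_inj (x : Cover V E i₀) {j j' : V} (hj : E x.lbl j) (hj' : E x.lbl j')
    (h : chd x j hj = chd x j' hj') : j = j' := by
  have := congrArg Cover.lbl h
  simpa using this

variable (pf : V → V → ℝ) (pm : V → ℝ)

theorem coverP_par (x : Cover V E i₀) :
    coverP E i₀ pf pm x (par x) = pm x.lbl := by
  by_cases hx : x = Cover.root
  · subst hx
    have hnc : ¬ Cover.IsChildOf (par (Cover.root : Cover V E i₀)) Cover.root := by
      rintro ⟨j, hj⟩
      exact absurd hj (by simp [Cover.root, par])
    rw [coverP, if_neg hnc, if_pos ⟨rfl, rfl⟩]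
    rfl
  · have h1 : ¬ Cover.IsChildOf (par x) x := by
      rintro ⟨j, hj⟩
      have hlen := congrArg List.length hj
      have hd : (par x).val.length = x.val.length - 1 := by
        show x.val.dropLast.length = _
        simp
      have hxl : x.val.length ≠ 0 := by
        simpa using (ne_root_iff.1 hx)
      simp only [List.length_append, List.length_cons, List.length_nil, hd] at hlen
      omega
    have h2 : ¬ (x.val = [] ∧ (par x).val = []) := by
      push_neg
      intro h; exact absurd h (ne_root_iff.1 hx)
    rw [coverP, if_neg h1, if_neg h2, if_pos ⟨x.lbl, (concat_eq hx).symm⟩]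

theorem coverP_chd (x : Cover V E i₀) (j : V) (hj : E x.lbl j) :
    coverP E i₀ pf pm x (chd x j hj) = pf x.lbl j := by
  rw [coverP, if_pos ⟨j, rfl⟩, lbl_chd]

theorem coverP_support {x y : Cover V E i₀}
    (h : coverP E i₀ pf pm x y ≠ 0) :
    y = par x ∨ ∃ (j : V) (hj : E x.lbl j), y = chd x j hj := by
  rw [coverP] at h
  split_ifs at h with h1 h2 h3
  · rcases h1 with ⟨j, hj⟩
    have hch : List.Chain E i₀ (x.val ++ [j]) := by rw [← hj]; exact y.2
    have hEj := ((chain_concat_iff _ _ _).1 hch).2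
    exact Or.inr ⟨j, hEj, Subtype.ext hj⟩
  · left
    apply Subtype.ext
    show y.val = x.val.dropLast
    rw [h2.1, h2.2]
    rfl
  · left
    rcases h3 with ⟨j, hj⟩
    apply Subtype.ext
    show y.val = x.val.dropLast
    rw [hj, List.dropLast_concat]
  · exact absurd rfl h

end CoverAux

/-- weight of a list of steps -/
noncomputable def wgt {S : Type} (q : S → S → ℝ≥0∞) : S → List S → ℝ≥0∞
  | _, [] => 1
  | x, y :: l => q x y * wgt q y l

theorem tsum_list_decomp {β : Type} (F : List β → ℝ≥0∞) :
    ∑' l : List β, F l = F [] + ∑' p : β × List β, F (p.1 :: p.2) := by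
  rw [ENNReal.tsum_eq_add_tsum_ite ([] : List β)]
  congr 1
  have hinj : Function.Injective (fun p : β × List β => p.1 :: p.2) := by
    rintro ⟨a, l⟩ ⟨b, m⟩ h
    simp only [List.cons.injEq] at h
    simp [h.1, h.2]
  have hsupp : Function.support (fun l : List β => if l = [] then 0 else F l)
      ⊆ Set.range (fun p : β × List β => p.1 :: p.2) := by
    intro l hl
    rcases l with _ | ⟨a, t⟩
    · simp at hl
    · exact ⟨(a, t), rfl⟩
  refine Eq.trans (tsum_congr (fun l : List β => ?_))
    ((hinj.tsum_eq (f := fun l : List β => if l = [] then 0 else F l) hsupp).symm.trans ?_)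
  · by_cases h : l = [] <;> simp [h]
  · apply tsum_congr
    rintro ⟨a, t⟩
    simp

theorem getD_cons_ofFn {α : Type} (a d : α) {n : ℕ} (f : Fin n → α) (k : ℕ) (hk : k < n) :
    (a :: List.ofFn f).getD (k+1) d = f ⟨k, hk⟩ := by
  rw [List.getD_cons_succ, List.getD_eq_getElem _ _ (by simpa using hk), List.getElem_ofFn]

noncomputable def PS {S : Type} (q : S → S → ℝ≥0∞) (pred : List S → Prop) (m : ℕ) (x : S) : ℝ≥0∞ :=
  ∑' l : List S, if l.length = m ∧ pred l then wgt q x l else 0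

theorem PS_succ {S : Type} (q : S → S → ℝ≥0∞) (pred : List S → Prop) (m : ℕ) (x : S) :
    PS q pred (m+1) x
      = ∑' y : S, q x y * ∑' l : List S, (if l.length = m ∧ pred (y :: l) then wgt q y l else 0) := by
  rw [PS, tsum_list_decomp]
  have h0 : (if ([] : List S).length = m+1 ∧ pred [] then wgt q x [] else 0) = 0 := by
    simp
  rw [h0, zero_add, ENNReal.tsum_prod']
  apply tsum_congr; intro y
  rw [← ENNReal.tsum_mul_left]
  apply tsum_congr; intro l
  by_cases h : l.length = m ∧ pred (y :: l)
  · rw [if_pos ⟨by simp [h.1], h.2⟩, if_pos h, wgt]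
  · rw [if_neg, if_neg h, mul_zero]
    intro hc
    exact h ⟨by simpa using hc.1, hc.2⟩

theorem PS_zero {S : Type} (q : S → S → ℝ≥0∞) (pred : List S → Prop) (x : S) (h : ¬ pred []) :
    PS q pred 0 x = 0 := by
  rw [PS]
  convert tsum_zero with l
  rcases l with _ | ⟨a, t⟩
  · simp [h]
  · simp

theorem PS_zero_one {S : Type} (q : S → S → ℝ≥0∞) (pred : List S → Prop) (x : S) (h : pred []) :
    PS q pred 0 x = 1 := by
  rw [PS]
  rw [tsum_eq_single ([] : List S)]
  · simp [h, wgt]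
  · intro l hl
    rcases l with _ | ⟨a, t⟩
    · simp at hl
    · simp

/-- **Theorem 2 (part).** If the upper Collatz–Wielandt number of the matrix
`M = (p(i,j)/p(-i))` satisfies `λ⁺(M) > 1`, then the nearest-neighbour random walk
on the directed cover `T` is transient (returns to the root with probability < 1). -/
theorem transient_of_lambdaPlus_gt_one
    {V : Type} [Countable V] (E : V → V → Prop) (i₀ : V)
    (hconn : ∀ i j : V, Relation.ReflTransGen E i j)
    (hout : ∀ i : V, {j | E i j}.Finite) (hin : ∀ i : V, {j | E j i}.Finite)
    (D : ℕ) (hD : ∀ i : V, {j | E i j}.ncard ≤ D ∧ {j | E j i}.ncard ≤ D)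
    (pG : V → V → ℝ) (hpG0 : ∀ i j, 0 ≤ pG i j) (hpGpos : ∀ i j, 0 < pG i j ↔ E i j)
    (hpGsum : ∀ i, ∑' j : V, pG i j = 1)
    (pm : V → ℝ) (ε : ℝ) (hε0 : 0 < ε) (hε1 : ε < 1)
    (hpm : ∀ i, ε < pm i ∧ pm i < 1 - ε)
    (hlam : lambdaPlus (fun i j => (1 - pm i) * pG i j / pm i) > 1) :
    ∀ (Ω : Type) (mΩ : MeasurableSpace Ω) (P : Measure Ω), IsProbabilityMeasure P →
      ∀ X : ℕ → Ω → Cover V E i₀,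
        IsCoverWalk E i₀ (fun i j => (1 - pm i) * pG i j) pm P X →
        P {ω | ∃ n : ℕ, 1 ≤ n ∧ X n ω = Cover.root} < 1 := by
  intro Ω mΩ P hP X hX
  classical
  -- basic positivity facts
  have hpm0 : ∀ i, 0 < pm i := fun i => lt_trans hε0 (hpm i).1
  have hpm1 : ∀ i, 0 < 1 - pm i := fun i => by have := (hpm i).2; linarith
  have hpGz : ∀ i j, ¬ E i j → pG i j = 0 := fun i j h =>
    le_antisymm (not_lt.1 (mt (hpGpos i j).1 h)) (hpG0 i j)
  set EF : V → Finset V := fun i => (hout i).toFinset with hEFdef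
  have hEF : ∀ i j, j ∈ EF i ↔ E i j := by
    intro i j; simp [hEFdef, Set.Finite.mem_toFinset]
  have hpGsumEF : ∀ i, ∑ j ∈ EF i, pG i j = 1 := by
    intro i
    rw [← hpGsum i]
    exact (tsum_eq_sum (fun j hj => hpGz i j (fun h => hj ((hEF i j).2 h)))).symm
  set M : V → V → ℝ := fun i j => (1 - pm i) * pG i j / pm i with hMdef
  set Pr : V → V → ℝ := fun i j => (1 - pm i) * pG i j with hPrdef
  have hM0 : ∀ i j, 0 ≤ M i j := fun i j =>
    div_nonneg (mul_nonneg (hpm1 i).le (hpG0 i j)) (hpm0 i).le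
  have hMz : ∀ i j, ¬ E i j → M i j = 0 := by
    intro i j h; simp [hMdef, hpGz i j h]
  have hMpos : ∀ {i j}, E i j → 0 < M i j := fun {i j} h =>
    div_pos (mul_pos (hpm1 i) ((hpGpos i j).2 h)) (hpm0 i)
  have hPr0 : ∀ i j, 0 ≤ Pr i j := fun i j => mul_nonneg (hpm1 i).le (hpG0 i j)
  have hPrM : ∀ i j, Pr i j = pm i * M i j := by
    intro i j
    simp only [hPrdef, hMdef]
    rw [eq_comm, mul_comm, div_mul_cancel₀ _ (hpm0 i).ne']
  have hPrsum : ∀ i, ∑ j ∈ EF i, Pr i j = 1 - pm i := by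
    intro i
    simp only [hPrdef]
    rw [← Finset.mul_sum, hpGsumEF i, mul_one]
  -- extract lambda and f
  rw [lambdaPlus] at hlam
  have hSne : {lam : ℝ | 0 < lam ∧ ∃ f : V → ℝ, (∀ i, 0 ≤ f i) ∧ f ≠ 0 ∧
      BddAbove (Set.range f) ∧ ∀ i, lam * f i ≤ ∑' j : V, M i j * f j}.Nonempty := by
    by_contra h
    rw [Set.not_nonempty_iff_eq_empty] at h
    rw [h, Real.sSup_empty] at hlam
    linarith
  obtain ⟨lam, hlamS, hlam1⟩ := exists_lt_of_lt_csSup hSne hlam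
  obtain ⟨hlam0, f, hf0, hfne, hfbdd, hfsup⟩ := hlamS
  have htsumTF : ∀ (g : V → ℝ) (i : V), ∑' j, M i j * g j = ∑ j ∈ EF i, M i j * g j := by
    intro g i
    exact tsum_eq_sum (fun j hj => by rw [hMz i j (fun h => hj ((hEF i j).2 h)), zero_mul])
  have hfsup' : ∀ i, lam * f i ≤ ∑ j ∈ EF i, M i j * f j := by
    intro i; rw [← htsumTF]; exact hfsup i
  set TF : (V → ℝ) → V → ℝ := fun g i => ∑ j ∈ EF i, M i j * g j with hTFdef
  set g : ℕ → V → ℝ := fun n => TF^[n] f with hgdef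
  have hgsucc : ∀ n, g (n+1) = TF (g n) := fun n => Function.iterate_succ_apply' TF n f
  have hgnn : ∀ n i, 0 ≤ g n i := by
    intro n
    induction n with
    | zero => exact hf0
    | succ n ih =>
      intro i
      rw [hgsucc]
      exact Finset.sum_nonneg (fun j _ => mul_nonneg (hM0 i j) (ih j))
  have hgsup : ∀ n i, lam * g n i ≤ g (n+1) i := by
    intro n
    induction n with
    | zero => exact hfsup'
    | succ n ih =>
      intro i
      rw [hgsucc (n+1)]
      calc lam * g (n+1) i = ∑ j ∈ EF i, M i j * (lam * g n j) := by
            rw [hgsucc n]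
            show lam * ∑ j ∈ EF i, M i j * g n j = _
            rw [Finset.mul_sum]
            exact Finset.sum_congr rfl (fun j _ => by ring)
        _ ≤ ∑ j ∈ EF i, M i j * g (n+1) j :=
            Finset.sum_le_sum (fun j _ => mul_le_mul_of_nonneg_left (ih j) (hM0 i j))
        _ = TF (g (n+1)) i := rfl
  -- row bound for M
  have hrowM : ∀ i, ∑ j ∈ EF i, M i j ≤ 1/ε := by
    intro i
    have h1 : ∑ j ∈ EF i, M i j = (1 - pm i)/pm i := by
      rw [eq_div_iff (hpm0 i).ne']
      rw [Finset.sum_mul]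
      have heq : ∀ j ∈ EF i, M i j * pm i = (1 - pm i) * pG i j := by
        intro j _
        simp only [hMdef]
        exact div_mul_cancel₀ _ (hpm0 i).ne'
      rw [Finset.sum_congr rfl heq, ← Finset.mul_sum, hpGsumEF i, mul_one]
    rw [h1, div_le_div_iff₀ (hpm0 i) hε0]
    have h2 := (hpm i).1
    have h3 := (hpm i).2
    nlinarith
  have hgbd : ∀ n, ∃ B, 0 ≤ B ∧ ∀ i, g n i ≤ B := by
    intro n
    induction n with
    | zero =>
      obtain ⟨B, hB⟩ := hfbdd
      exact ⟨max B 0, le_max_right _ _, fun i => le_trans (hB ⟨i, rfl⟩) (le_max_left _ _)⟩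
    | succ n ih =>
      obtain ⟨B, hB0, hBb⟩ := ih
      refine ⟨(1/ε) * B, mul_nonneg (by positivity) hB0, fun i => ?_⟩
      rw [hgsucc]
      calc TF (g n) i ≤ ∑ j ∈ EF i, M i j * B :=
            Finset.sum_le_sum (fun j _ => mul_le_mul_of_nonneg_left (hBb j) (hM0 i j))
        _ = (∑ j ∈ EF i, M i j) * B := by rw [Finset.sum_mul]
        _ ≤ (1/ε) * B := mul_le_mul_of_nonneg_right (hrowM i) hB0
  -- positivity propagation
  have hex : ∃ j, 0 < pG i₀ j := by
    by_contra h
    push_neg at h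
    have hz : ∀ j, pG i₀ j = 0 := fun j => le_antisymm (h j) (hpG0 i₀ j)
    have h1 := hpGsum i₀
    rw [tsum_congr hz, tsum_zero] at h1
    linarith
  obtain ⟨jstar, hjstar⟩ := hex
  have hEstar : E i₀ jstar := (hpGpos _ _).1 hjstar
  obtain ⟨j₀, hj₀⟩ : ∃ j, 0 < f j := by
    rcases Function.ne_iff.1 hfne with ⟨j, hj⟩
    exact ⟨j, lt_of_le_of_ne (hf0 j) (Ne.symm hj)⟩
  have hprop : ∀ a, Relation.ReflTransGen E a j₀ → ∃ n, 0 < g n a := by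
    intro a h
    induction h using Relation.ReflTransGen.head_induction_on with
    | refl => exact ⟨0, hj₀⟩
    | head hE hrest ih =>
      rename_i a' c'
      obtain ⟨n, hn⟩ := ih
      refine ⟨n+1, ?_⟩
      rw [hgsucc]
      have h1 : M a' c' * g n c' ≤ ∑ j ∈ EF a', M a' j * g n j :=
        Finset.single_le_sum (f := fun j => M a' j * g n j)
          (fun j _ => mul_nonneg (hM0 a' j) (hgnn n j)) ((hEF a' c').2 hE)
      have h2 : 0 < M a' c' * g n c' := mul_pos (hMpos hE) hn
      exact lt_of_lt_of_le h2 h1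
  obtain ⟨K, hK⟩ := hprop jstar (hconn jstar j₀)
  set f' : V → ℝ := fun i => ∑ n ∈ Finset.range (K+1), g n i with hf'def
  have hf'0 : ∀ i, 0 ≤ f' i := fun i => Finset.sum_nonneg (fun n _ => hgnn n i)
  obtain ⟨B', hB'0, hB'⟩ : ∃ B', 0 < B' ∧ ∀ i, f' i ≤ B' := by
    choose B hB0 hBb using hgbd
    refine ⟨(∑ n ∈ Finset.range (K+1), B n) + 1,
      by have := Finset.sum_nonneg (fun n (_ : n ∈ Finset.range (K+1)) => hB0 n); linarith,
      fun i => ?_⟩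
    have h1 : f' i ≤ ∑ n ∈ Finset.range (K+1), B n :=
      Finset.sum_le_sum (fun n _ => hBb n i)
    linarith
  have hTFf' : ∀ i, lam * f' i ≤ ∑ j ∈ EF i, M i j * f' j := by
    intro i
    have h1 : ∑ j ∈ EF i, M i j * f' j = ∑ n ∈ Finset.range (K+1), g (n+1) i := by
      calc ∑ j ∈ EF i, M i j * f' j
          = ∑ j ∈ EF i, ∑ n ∈ Finset.range (K+1), M i j * g n j := by
            apply Finset.sum_congr rfl
            intro j _
            simp only [hf'def]
            rw [Finset.mul_sum]
        _ = ∑ n ∈ Finset.range (K+1), ∑ j ∈ EF i, M i j * g n j := Finset.sum_comm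
        _ = ∑ n ∈ Finset.range (K+1), g (n+1) i := by
            apply Finset.sum_congr rfl
            intro n _
            rw [hgsucc n]
    rw [h1]
    have h2 : lam * f' i = ∑ n ∈ Finset.range (K+1), lam * g n i := by
      simp only [hf'def]; rw [Finset.mul_sum]
    rw [h2]
    exact Finset.sum_le_sum (fun n _ => hgsup n i)
  have hf'pos : 0 < f' jstar := by
    have h1 : g K jstar ≤ f' jstar :=
      Finset.single_le_sum (f := fun n => g n jstar) (fun n _ => hgnn n jstar)
        (Finset.mem_range.2 (Nat.lt_succ_self K))
    linarith
  set c : ℝ := (1 - 1/lam) / B' with hcdef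
  have hlamNe : lam ≠ 0 := ne_of_gt (by linarith)
  have hinvlam : 1/lam < 1 := by
    rw [div_lt_one (by linarith)]; exact hlam1
  have hinvlam0 : 0 < 1/lam := by positivity
  have hc0 : 0 < c := div_pos (by linarith) hB'0
  have hcf' : ∀ i, c * f' i ≤ 1 - 1/lam := by
    intro i
    calc c * f' i ≤ c * B' := mul_le_mul_of_nonneg_left (hB' i) hc0.le
      _ = 1 - 1/lam := by
          rw [hcdef]
          field_simp
  set Gf : V → ℝ := fun i => 1 - c * f' i with hGfdef
  have hGlb : ∀ i, 1/lam ≤ Gf i := by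
    intro i; have := hcf' i; simp only [hGfdef]; linarith
  have hGpos : ∀ i, 0 < Gf i := fun i => lt_of_lt_of_le hinvlam0 (hGlb i)
  have hGub : ∀ i, Gf i ≤ 1 := by
    intro i
    have := mul_nonneg hc0.le (hf'0 i)
    simp only [hGfdef]; linarith
  have hPG : ∀ i, ∑ j ∈ EF i, Pr i j * Gf j
      = (1 - pm i) - c * ∑ j ∈ EF i, Pr i j * f' j := by
    intro i
    calc ∑ j ∈ EF i, Pr i j * Gf j
        = ∑ j ∈ EF i, (Pr i j - c * (Pr i j * f' j)) := by
          apply Finset.sum_congr rfl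
          intro j _
          simp only [hGfdef]
          ring
      _ = (∑ j ∈ EF i, Pr i j) - c * ∑ j ∈ EF i, Pr i j * f' j := by
          rw [Finset.sum_sub_distrib, Finset.mul_sum]
      _ = (1 - pm i) - c * ∑ j ∈ EF i, Pr i j * f' j := by rw [hPrsum i]
  -- the supersolution inequality
  have hiG : ∀ i, pm i + (∑ j ∈ EF i, Pr i j * Gf j) * Gf i ≤ Gf i := by
    intro i
    set Sp : ℝ := ∑ j ∈ EF i, Pr i j * f' j with hSpdef
    have hSp : pm i * (lam * f' i) ≤ Sp := by
      have h1 : Sp = pm i * ∑ j ∈ EF i, M i j * f' j := by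
        rw [hSpdef, Finset.mul_sum]
        exact Finset.sum_congr rfl (fun j _ => by rw [hPrM i j]; ring)
      rw [h1]
      exact mul_le_mul_of_nonneg_left (hTFf' i) (hpm0 i).le
    have hSp0 : 0 ≤ Sp :=
      Finset.sum_nonneg (fun j _ => mul_nonneg (hPr0 i j) (hf'0 j))
    have hGfi : Gf i = 1 - c * f' i := by simp only [hGfdef]
    have k2 : c * (pm i * (lam * f' i)) * (1/lam) = pm i * (c * f' i) := by
      field_simp
    have k3 : c * (pm i * (lam * f' i)) ≤ c * Sp := mul_le_mul_of_nonneg_left hSp hc0.le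
    have k4 : c * (pm i * (lam * f' i)) * (1/lam) ≤ (c * Sp) * (1/lam) :=
      mul_le_mul_of_nonneg_right k3 hinvlam0.le
    have k5 : (c * Sp) * (1/lam) ≤ (c * Sp) * Gf i :=
      mul_le_mul_of_nonneg_left (hGlb i) (mul_nonneg hc0.le hSp0)
    have k1 : pm i * (c * f' i) ≤ (c * Sp) * Gf i := by
      rw [← k2]; exact le_trans k4 k5
    rw [hPG i, ← hSpdef]
    rw [hGfi] at k1 ⊢
    nlinarith [k1]
  -- root strictness
  have hstar : Pr i₀ jstar * f' jstar ≤ ∑ j ∈ EF i₀, Pr i₀ j * f' j :=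
    Finset.single_le_sum (f := fun j => Pr i₀ j * f' j)
      (fun j _ => mul_nonneg (hPr0 i₀ j) (hf'0 j)) ((hEF i₀ jstar).2 hEstar)
  have hPrstar : 0 < Pr i₀ jstar := by
    simp only [hPrdef]
    exact mul_pos (hpm1 i₀) hjstar
  set δ : ℝ := c * (Pr i₀ jstar * f' jstar) with hδdef
  have hδ0 : 0 < δ := mul_pos hc0 (mul_pos hPrstar hf'pos)
  have hρ : pm i₀ + (∑ j ∈ EF i₀, Pr i₀ j * Gf j) ≤ 1 - δ := by
    rw [hPG i₀]
    have h1 : δ ≤ c * ∑ j ∈ EF i₀, Pr i₀ j * f' j :=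
      mul_le_mul_of_nonneg_left hstar hc0.le
    linarith
  -- ============ Cover level ============
  set q : Cover V E i₀ → Cover V E i₀ → ℝ≥0∞ :=
    fun x y => ENNReal.ofReal (coverP E i₀ Pr pm x y) with hqdef
  set Hf : Cover V E i₀ → ℝ := fun x => (x.val.map Gf).prod with hHfdef
  have hprodmem : ∀ l : List V, 0 < (l.map Gf).prod ∧ (l.map Gf).prod ≤ 1 := by
    intro l
    induction l with
    | nil => simp
    | cons a t ih =>
      rw [List.map_cons, List.prod_cons]
      constructor
      · exact mul_pos (hGpos a) ih.1
      · nlinarith [hGpos a, hGub a, ih.1, ih.2]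
  have hh_pos : ∀ x : Cover V E i₀, 0 < Hf x := fun x => (hprodmem x.val).1
  have hh_root : Hf Cover.root = 1 := by simp [hHfdef, Cover.root]
  have hh_chd : ∀ (x : Cover V E i₀) (j : V) (hj : E x.lbl j),
      Hf (CoverAux.chd x j hj) = Hf x * Gf j := by
    intro x j hj
    simp only [hHfdef, CoverAux.chd]
    rw [List.map_append, List.prod_append]
    simp
  have hh_par : ∀ x : Cover V E i₀, x ≠ Cover.root → Hf x = Hf (CoverAux.par x) * Gf x.lbl := by
    intro x hx
    simp only [hHfdef]
    conv_lhs => rw [← CoverAux.concat_eq hx]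
    rw [List.map_append, List.prod_append]
    simp
  -- the core one-step bound
  have core : ∀ (x : Cover V E i₀) (u : Cover V E i₀ → ℝ≥0∞) (H : Cover V E i₀ → ℝ),
      (∀ y, 0 ≤ H y) → (∀ y, u y ≤ ENNReal.ofReal (H y)) →
      ∑' y, q x y * u y ≤ ENNReal.ofReal (pm x.lbl * H (CoverAux.par x)
        + ∑ j ∈ EF x.lbl, if hj : E x.lbl j then Pr x.lbl j * H (CoverAux.chd x j hj) else 0) := by
    intro x u H hH0 hu
    classical
    set CF : Finset (Cover V E i₀) :=
      (EF x.lbl).attach.image (fun j => CoverAux.chd x j.1 ((hEF x.lbl j.1).1 j.2)) with hCFdef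
    have hsupp : ∀ y ∉ insert (CoverAux.par x) CF, q x y * u y = 0 := by
      intro y hy
      by_cases hc : coverP E i₀ Pr pm x y = 0
      · simp [hqdef, hc]
      · exfalso
        rcases CoverAux.coverP_support Pr pm hc with h1 | ⟨j, hj, h1⟩
        · exact hy (by rw [h1]; exact Finset.mem_insert_self _ _)
        · refine hy (Finset.mem_insert_of_mem ?_)
          rw [hCFdef]
          refine Finset.mem_image.2 ⟨⟨j, (hEF x.lbl j).2 hj⟩, Finset.mem_attach _ _, ?_⟩
          rw [h1]
    have hcount : ∑' y, q x y * u y = ∑ y ∈ insert (CoverAux.par x) CF, q x y * u y :=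
      tsum_eq_sum hsupp
    have hparCF : CoverAux.par x ∉ CF := by
      rw [hCFdef]
      intro hmem
      obtain ⟨j, _, hj⟩ := Finset.mem_image.1 hmem
      have h2 := congrArg (fun z : Cover V E i₀ => z.val.length) hj
      simp only [CoverAux.chd, CoverAux.par, List.length_append, List.length_dropLast,
        List.length_cons, List.length_nil] at h2
      omega
    rw [hcount, Finset.sum_insert hparCF]
    have hparterm : q x (CoverAux.par x) * u (CoverAux.par x)
        ≤ ENNReal.ofReal (pm x.lbl * H (CoverAux.par x)) := by
      simp only [hqdef]
      rw [CoverAux.coverP_par Pr pm x, ENNReal.ofReal_mul (hpm0 x.lbl).le]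
      exact mul_le_mul_right (hu _) _
    have hCFsum : ∑ y ∈ CF, q x y * u y
        ≤ ENNReal.ofReal (∑ j ∈ EF x.lbl,
            if hj : E x.lbl j then Pr x.lbl j * H (CoverAux.chd x j hj) else 0) := by
      rw [hCFdef]
      rw [Finset.sum_image (fun a _ b _ hab => Subtype.ext (CoverAux.chd_inj x _ _ hab))]
      calc ∑ j ∈ (EF x.lbl).attach,
            q x (CoverAux.chd x j.1 ((hEF x.lbl j.1).1 j.2)) * u (CoverAux.chd x j.1 ((hEF x.lbl j.1).1 j.2))
          ≤ ∑ j ∈ (EF x.lbl).attach,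
            ENNReal.ofReal (Pr x.lbl j.1 * H (CoverAux.chd x j.1 ((hEF x.lbl j.1).1 j.2))) := by
            apply Finset.sum_le_sum
            intro j _
            simp only [hqdef]
            rw [CoverAux.coverP_chd Pr pm x j.1 _, ENNReal.ofReal_mul (hPr0 _ _)]
            exact mul_le_mul_right (hu _) _
        _ = ENNReal.ofReal (∑ j ∈ (EF x.lbl).attach,
              Pr x.lbl j.1 * H (CoverAux.chd x j.1 ((hEF x.lbl j.1).1 j.2))) := by
            rw [ENNReal.ofReal_sum_of_nonneg]
            intro j _
            exact mul_nonneg (hPr0 _ _) (hH0 _)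
        _ = ENNReal.ofReal (∑ j ∈ EF x.lbl,
              if hj : E x.lbl j then Pr x.lbl j * H (CoverAux.chd x j hj) else 0) := by
            congr 1
            rw [← Finset.sum_attach (EF x.lbl)
              (fun j => if hj : E x.lbl j then Pr x.lbl j * H (CoverAux.chd x j hj) else 0)]
            apply Finset.sum_congr rfl
            intro j _
            rw [dif_pos ((hEF x.lbl j.1).1 j.2)]
    calc q x (CoverAux.par x) * u (CoverAux.par x) + ∑ y ∈ CF, q x y * u y
        ≤ ENNReal.ofReal (pm x.lbl * H (CoverAux.par x))
          + ENNReal.ofReal (∑ j ∈ EF x.lbl,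
              if hj : E x.lbl j then Pr x.lbl j * H (CoverAux.chd x j hj) else 0) :=
          add_le_add hparterm hCFsum
      _ = ENNReal.ofReal (pm x.lbl * H (CoverAux.par x)
          + ∑ j ∈ EF x.lbl, if hj : E x.lbl j then Pr x.lbl j * H (CoverAux.chd x j hj) else 0) := by
          rw [← ENNReal.ofReal_add (mul_nonneg (hpm0 _).le (hH0 _))]
          apply Finset.sum_nonneg
          intro j _
          by_cases hj : E x.lbl j
          · rw [dif_pos hj]; exact mul_nonneg (hPr0 _ _) (hH0 _)
          · rw [dif_neg hj]
  -- rewriting the children sum using Gf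
  have hdsum : ∀ x : Cover V E i₀,
      (∑ j ∈ EF x.lbl, if hj : E x.lbl j then Pr x.lbl j * Hf (CoverAux.chd x j hj) else 0)
        = (∑ j ∈ EF x.lbl, Pr x.lbl j * Gf j) * Hf x := by
    intro x
    rw [Finset.sum_mul]
    apply Finset.sum_congr rfl
    intro j hj
    rw [dif_pos ((hEF _ j).1 hj), hh_chd x j _]
    ring
  have step : ∀ (x : Cover V E i₀) (u : Cover V E i₀ → ℝ≥0∞),
      (∀ y, u y ≤ ENNReal.ofReal (Hf y)) → ∑' y, q x y * u y ≤ ENNReal.ofReal (Hf x) := by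
    intro x u hu
    refine le_trans (core x u Hf (fun y => (hh_pos y).le) hu) (ENNReal.ofReal_le_ofReal ?_)
    rw [hdsum x]
    by_cases hx : x = Cover.root
    · subst hx
      rw [CoverAux.par_root, hh_root, mul_one, mul_one]
      show pm i₀ + (∑ j ∈ EF i₀, Pr i₀ j * Gf j) ≤ 1
      linarith [hρ, hδ0]
    · have hxpar := hh_par x hx
      have h2 : 0 < Hf (CoverAux.par x) := hh_pos _
      rw [hxpar]
      nlinarith [mul_le_mul_of_nonneg_right (hiG x.lbl) h2.le]
  have one : ∀ (x : Cover V E i₀) (u : Cover V E i₀ → ℝ≥0∞),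
      (∀ y, u y ≤ 1) → ∑' y, q x y * u y ≤ 1 := by
    intro x u hu
    have h1 := core x u (fun _ => (1:ℝ)) (fun _ => zero_le_one)
      (fun y => by simpa using hu y)
    refine le_trans h1 ?_
    rw [← ENNReal.ofReal_one]
    apply ENNReal.ofReal_le_ofReal
    have hd : (∑ j ∈ EF x.lbl, if _ : E x.lbl j then Pr x.lbl j * (1:ℝ) else 0)
        = 1 - pm x.lbl := by
      rw [← hPrsum x.lbl]
      apply Finset.sum_congr rfl
      intro j hj
      rw [dif_pos ((hEF _ j).1 hj), mul_one]
    rw [hd, mul_one]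
    linarith
  have stepρ : ∀ (u : Cover V E i₀ → ℝ≥0∞),
      (∀ y, u y ≤ ENNReal.ofReal (Hf y)) →
        ∑' y, q Cover.root y * u y ≤ ENNReal.ofReal (1 - δ) := by
    intro u hu
    refine le_trans (core Cover.root u Hf (fun y => (hh_pos y).le) hu)
      (ENNReal.ofReal_le_ofReal ?_)
    rw [hdsum Cover.root, CoverAux.par_root, hh_root, mul_one, mul_one]
    show pm i₀ + (∑ j ∈ EF i₀, Pr i₀ j * Gf j) ≤ 1 - δ
    exact hρ
  -- ============ path sums ============
  obtain ⟨pred2, hpred2def⟩ :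
      ∃ p : List (Cover V E i₀) → Prop, p = fun l => Cover.root ∈ l := ⟨_, rfl⟩
  have P1le : ∀ m (x : Cover V E i₀), PS q (fun _ => True) m x ≤ 1 := by
    intro m
    induction m with
    | zero =>
      intro x
      rw [PS_zero_one q _ x trivial]
    | succ m ih =>
      intro x
      rw [PS_succ]
      exact one x _ (fun y => ih y)
  have hinner : ∀ m, (∀ z : Cover V E i₀, PS q pred2 m z ≤ ENNReal.ofReal (Hf z)) →
      ∀ y : Cover V E i₀,
        PS q (fun l => pred2 (y :: l)) m y ≤ ENNReal.ofReal (Hf y) := by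
    intro m ihm y
    by_cases hy : y = Cover.root
    · subst hy
      calc PS q (fun l => pred2 (Cover.root :: l)) m Cover.root
          = PS q (fun _ => True) m Cover.root := by
            rw [PS, PS]
            apply tsum_congr; intro l
            by_cases hl : l.length = m
            · rw [if_pos ⟨hl, by rw [hpred2def]; exact List.mem_cons_self⟩,
                if_pos ⟨hl, trivial⟩]
            · rw [if_neg (fun hc => hl hc.1), if_neg (fun hc => hl hc.1)]
        _ ≤ 1 := P1le m _
        _ = ENNReal.ofReal (Hf Cover.root) := by rw [hh_root, ENNReal.ofReal_one]
    · calc PS q (fun l => pred2 (y :: l)) m y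
          = PS q pred2 m y := by
            rw [PS, PS]
            apply tsum_congr; intro l
            by_cases hc : l.length = m ∧ pred2 l
            · have hyl : pred2 (y :: l) := by
                rw [hpred2def] at hc ⊢
                exact List.mem_cons_of_mem _ hc.2
              rw [if_pos ⟨hc.1, hyl⟩, if_pos hc]
            · have hyl : ¬ (l.length = m ∧ pred2 (y :: l)) := by
                rintro ⟨h1, h2⟩
                apply hc
                refine ⟨h1, ?_⟩
                rw [hpred2def] at h2 ⊢
                rcases List.mem_cons.1 h2 with h3 | h3
                · exact absurd h3.symm hy
                · exact h3
              rw [if_neg hyl, if_neg hc]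
        _ ≤ ENNReal.ofReal (Hf y) := ihm y
  have P2le : ∀ m (x : Cover V E i₀), PS q pred2 m x ≤ ENNReal.ofReal (Hf x) := by
    intro m
    induction m with
    | zero =>
      intro x
      rw [PS_zero q _ x (by rw [hpred2def]; simp)]
      exact zero_le
    | succ m ih =>
      intro x
      rw [PS_succ]
      exact step x _ (hinner m ih)
  have P2ρ : ∀ m, PS q pred2 (m+1) Cover.root ≤ ENNReal.ofReal (1 - δ) := by
    intro m
    rw [PS_succ]
    exact stepρ _ (hinner m (P2le m))
  -- ============ measure estimate ============
  have hXf := hX.2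
  have hZ : P {ω | X 0 ω ≠ Cover.root} = 0 := by
    have hsub : {ω | X 0 ω ≠ Cover.root}
        ⊆ ⋃ (x : Cover V E i₀), {ω | x ≠ Cover.root ∧ X 0 ω = x} := by
      intro ω hω
      exact Set.mem_iUnion.2 ⟨X 0 ω, hω, rfl⟩
    refine measure_mono_null hsub (measure_iUnion_null (fun x => ?_))
    by_cases hx : x = Cover.root
    · have he : {ω | x ≠ Cover.root ∧ X 0 ω = x} = ∅ := by
        ext ω; simp [hx]
      rw [he, measure_empty]
    · have hsub2 : {ω | x ≠ Cover.root ∧ X 0 ω = x}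
          ⊆ {ω | ∀ k ≤ 0, X k ω = (fun _ => x) k} := by
        intro ω hω k hk
        rw [Nat.le_zero.1 hk]
        exact hω.2
      refine measure_mono_null hsub2 ?_
      rw [hXf 0 (fun _ => x)]
      simp [hx]
  have hwgt : ∀ (l : List (Cover V E i₀)) (x : Cover V E i₀),
      ∏ k ∈ Finset.range l.length,
        ENNReal.ofReal (coverP E i₀ Pr pm ((x :: l).getD k Cover.root)
          ((x :: l).getD (k+1) Cover.root))
        = wgt q x l := by
    intro l
    induction l with
    | nil => intro x; simp [wgt]
    | cons y t ih =>
      intro x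
      rw [List.length_cons, Finset.prod_range_succ']
      have h2 : ∀ k ∈ Finset.range t.length,
          ENNReal.ofReal (coverP E i₀ Pr pm ((x :: y :: t).getD (k+1) Cover.root)
            ((x :: y :: t).getD (k+1+1) Cover.root))
          = ENNReal.ofReal (coverP E i₀ Pr pm ((y :: t).getD k Cover.root)
            ((y :: t).getD (k+1) Cover.root)) := by
        intro k _
        simp [List.getD_cons_succ]
      rw [Finset.prod_congr rfl h2, ih y]
      have h3 : ENNReal.ofReal (coverP E i₀ Pr pm ((x :: y :: t).getD 0 Cover.root)
          ((x :: y :: t).getD (0+1) Cover.root)) = q x y := by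
        simp only [hqdef, List.getD_cons_zero, List.getD_cons_succ]
      rw [h3, mul_comm]
      rfl
  have hBN : ∀ N : ℕ, P {ω | ∃ n, 1 ≤ n ∧ n ≤ N ∧ X n ω = Cover.root}
      ≤ ENNReal.ofReal (1 - δ) := by
    intro N
    rcases N with _ | N
    · have he : {ω | ∃ n, 1 ≤ n ∧ n ≤ 0 ∧ X n ω = Cover.root} = ∅ := by
        ext ω
        simp only [Set.mem_setOf_eq, Set.mem_empty_iff_false, iff_false, not_exists]
        intro n hn
        obtain ⟨h1, h2, -⟩ := hn
        omega
      rw [he, measure_empty]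
      exact zero_le
    · set SN : Set (List (Cover V E i₀)) := {l | l.length = N+1 ∧ Cover.root ∈ l} with hSNdef
      have hcover : {ω | ∃ n, 1 ≤ n ∧ n ≤ N+1 ∧ X n ω = Cover.root}
          ⊆ {ω | X 0 ω ≠ Cover.root}
            ∪ ⋃ (l : SN), {ω | ∀ k ≤ N+1, X k ω = (Cover.root :: l.1).getD k Cover.root} := by
        intro ω hω
        by_cases h0 : X 0 ω = Cover.root
        · right
          obtain ⟨n, hn1, hn2, hnr⟩ := hω
          refine Set.mem_iUnion.2 ⟨⟨List.ofFn (fun k : Fin (N+1) => X (k.1+1) ω), ?_, ?_⟩, ?_⟩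
          · simp
          · rw [List.mem_ofFn]
            refine ⟨⟨n-1, by omega⟩, ?_⟩
            show X ((n-1)+1) ω = Cover.root
            rw [show n - 1 + 1 = n by omega]
            exact hnr
          · intro k hk
            show X k ω
              = (Cover.root :: List.ofFn (fun k : Fin (N+1) => X (k.1+1) ω)).getD k Cover.root
            rcases k with _ | k
            · simpa using h0
            · rw [getD_cons_ofFn _ _ _ k (by omega : k < N+1)]
        · left; exact h0
      calc P {ω | ∃ n, 1 ≤ n ∧ n ≤ N+1 ∧ X n ω = Cover.root}
          ≤ P ({ω | X 0 ω ≠ Cover.root}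
            ∪ ⋃ (l : SN), {ω | ∀ k ≤ N+1, X k ω = (Cover.root :: l.1).getD k Cover.root}) :=
            measure_mono hcover
        _ ≤ P {ω | X 0 ω ≠ Cover.root}
            + P (⋃ (l : SN), {ω | ∀ k ≤ N+1, X k ω = (Cover.root :: l.1).getD k Cover.root}) :=
            measure_union_le _ _
        _ = P (⋃ (l : SN), {ω | ∀ k ≤ N+1, X k ω = (Cover.root :: l.1).getD k Cover.root}) := by
            rw [hZ, zero_add]
        _ ≤ ∑' (l : SN), P {ω | ∀ k ≤ N+1, X k ω = (Cover.root :: l.1).getD k Cover.root} :=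
            measure_iUnion_le _
        _ = ∑' (l : SN), wgt q Cover.root l.1 := by
            apply tsum_congr; intro l
            have hmem : l.1.length = N+1 ∧ Cover.root ∈ l.1 := l.2
            rw [hXf (N+1) (fun k => (Cover.root :: l.1).getD k Cover.root)]
            have hpath0 : (fun k => (Cover.root :: l.1).getD k Cover.root) 0 = Cover.root := by
              simp
            rw [if_pos hpath0, one_mul]
            rw [← hmem.1]
            exact hwgt l.1 Cover.root
        _ ≤ PS q pred2 (N+1) Cover.root := by
            have h1 : ∀ l : SN, wgt q Cover.root l.1
                = (fun l' : List (Cover V E i₀) =>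
                    if l'.length = N+1 ∧ pred2 l' then wgt q Cover.root l' else 0) l.1 := by
              intro l
              have hmem : l.1.length = N+1 ∧ Cover.root ∈ l.1 := l.2
              show wgt q Cover.root l.1
                = if l.1.length = N+1 ∧ pred2 l.1 then wgt q Cover.root l.1 else 0
              rw [if_pos ⟨hmem.1, by rw [hpred2def]; exact hmem.2⟩]
            rw [tsum_congr h1]
            exact ENNReal.tsum_comp_le_tsum_of_injective Subtype.val_injective _
        _ ≤ ENNReal.ofReal (1 - δ) := P2ρ N
  have hunion : {ω | ∃ n, 1 ≤ n ∧ X n ω = Cover.root}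
      = ⋃ N : ℕ, {ω | ∃ n, 1 ≤ n ∧ n ≤ N ∧ X n ω = Cover.root} := by
    ext ω
    simp only [Set.mem_iUnion, Set.mem_setOf_eq]
    constructor
    · rintro ⟨n, h1, h2⟩; exact ⟨n, n, h1, le_refl n, h2⟩
    · rintro ⟨N, n, h1, _, h2⟩; exact ⟨n, h1, h2⟩
  have hmono : Monotone (fun N : ℕ => {ω | ∃ n, 1 ≤ n ∧ n ≤ N ∧ X n ω = Cover.root}) := by
    intro a b hab ω hω
    obtain ⟨n, h1, h2, h3⟩ := hω
    exact ⟨n, h1, le_trans h2 hab, h3⟩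
  rw [hunion, hmono.measure_iUnion]
  have hlast : ENNReal.ofReal (1 - δ) < 1 := by
    rw [ENNReal.ofReal_lt_one]
    linarith
  exact lt_of_le_of_lt (iSup_le hBN) hlast
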